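/- Let k be a field of characteristic p > 0, G a finite p-group, and V a nonzero finite-dimensional kG-module. If v ∈ V satisfies tr(v) := Σ_{g∈G} v·g ≠ 0, then the kG-submodule generated by the orbit {v·g : g ∈ G} is a free kG-module of rank one. -/

import Mathlib

set_option maxHeartbeats 1000000
set_option synthInstance.maxHeartbeats 400000

open MonoidAlgebra

/-- Key lemma: in `kG` (`G` a finite `p`-group, `char k = p`), every nonzero element `a`
left-divides a nonzero scalar multiple of the "norm" element `Σ_{g∈G} g`. -/
private lemma exists_mul_eq_smul_sum
    {p : ℕ} [Fact p.Prime] (k : Type*) [Field k] [CharP k p]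
    (G : Type*) [Group G] [Fintype G] (hG : IsPGroup p G)
    {a : MonoidAlgebra k G} (ha : a ≠ 0) :
    ∃ (b : MonoidAlgebra k G) (c : k), c ≠ 0 ∧
      b * a = c • ((∑ g : G, MonoidAlgebra.of k G g) : MonoidAlgebra k G) := by
  classical
  letI : Algebra (ZMod p) k := ZMod.algebra k p
  letI : Module (ZMod p) (MonoidAlgebra k G) :=
    Module.compHom _ (algebraMap (ZMod p) k)
  have hzsmul : ∀ (z : ZMod p) (x : MonoidAlgebra k G),
      z • x = (algebraMap (ZMod p) k z) • x := fun _ _ => rfl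
  set T : Submodule (ZMod p) (MonoidAlgebra k G) :=
    Submodule.span (ZMod p) (Set.range fun g : G => of k G g * a) with hT
  have htmem : ∀ (g : G), ∀ x ∈ T, of k G g * x ∈ T := by
    intro g x hx
    induction hx using Submodule.span_induction with
    | mem x hx =>
      obtain ⟨h, rfl⟩ := hx
      rw [← mul_assoc, ← map_mul]
      exact Submodule.subset_span ⟨g * h, rfl⟩
    | zero => simp only [mul_zero]; exact T.zero_mem
    | add x y _ _ hx hy => rw [mul_add]; exact T.add_mem hx hy
    | smul z x _ hx =>
      show of k G g * ((algebraMap (ZMod p) k z) • x) ∈ T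
      rw [mul_smul_comm, ← hzsmul]
      exact T.smul_mem z hx
  letI : MulAction G T :=
    { smul := fun g x => ⟨of k G g * x, htmem g x x.2⟩
      one_smul := fun x => Subtype.ext (by
        show of k G 1 * (x : MonoidAlgebra k G) = x
        rw [map_one, one_mul])
      mul_smul := fun g h x => Subtype.ext (by
        show of k G (g * h) * (x : MonoidAlgebra k G) = of k G g * (of k G h * x)
        rw [map_mul, mul_assoc]) }
  haveI : Module.Finite (ZMod p) T := Module.Finite.span_of_finite _ (Set.finite_range _)
  haveI : Finite T := Module.finite_of_finite (ZMod p)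
  haveI : Fintype T := Fintype.ofFinite T
  have haT : a ∈ T := by
    refine Submodule.subset_span ⟨1, ?_⟩
    show of k G 1 * a = a
    rw [map_one, one_mul]
  haveI : Nontrivial T := ⟨⟨⟨a, haT⟩, 0, by
    simp only [ne_eq, Submodule.mk_eq_zero]; exact ha⟩⟩
  have h0 : (0 : T) ∈ MulAction.fixedPoints G T := by
    intro g
    exact Subtype.ext (by show of k G g * ((0 : T) : MonoidAlgebra k G) = _; simp)
  have hdvd : p ∣ Nat.card T := by
    rw [Nat.card_eq_fintype_card, Module.card_eq_pow_finrank (K := ZMod p) (V := T), ZMod.card]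
    exact dvd_pow_self p (Module.finrank_pos (R := ZMod p) (M := T)).ne'
  obtain ⟨y, hyfix, hyne⟩ := hG.exists_fixed_point_of_prime_dvd_card_of_fixed_point (α := T) hdvd h0
  have hfix : ∀ g : G, of k G g * (y : MonoidAlgebra k G) = y :=
    fun g => congrArg Subtype.val (hyfix g)
  have hcoef : ∀ g : G, (y : MonoidAlgebra k G).coeff g = (y : MonoidAlgebra k G).coeff 1 := by
    intro g
    have h := congrArg (fun f : MonoidAlgebra k G => f.coeff g) (hfix g)
    simpa [MonoidAlgebra.of_apply, MonoidAlgebra.single_mul_apply] using h.symm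
  set c : k := (y : MonoidAlgebra k G).coeff 1 with hc
  have hcne : c ≠ 0 := by
    intro h0'
    apply hyne
    symm
    ext g
    simp [hcoef g, h0']
  have hyN : (y : MonoidAlgebra k G)
      = c • ((∑ g : G, of k G g) : MonoidAlgebra k G) := by
    rw [Finset.smul_sum]
    ext h
    rw [MonoidAlgebra.coeff_sum, Finsupp.finset_sum_apply]
    simp [MonoidAlgebra.of_apply, Finsupp.single_apply, hcoef h]
  have hTsub : ∀ x ∈ T, x ∈ Submodule.span (MonoidAlgebra k G) ({a} : Set (MonoidAlgebra k G)) := by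
    intro x hx
    induction hx using Submodule.span_induction with
    | mem x hx =>
      obtain ⟨g, rfl⟩ := hx
      exact Submodule.mem_span_singleton.2 ⟨of k G g, by rw [smul_eq_mul]⟩
    | zero => exact Submodule.zero_mem _
    | add x y _ _ hx hy => exact Submodule.add_mem _ hx hy
    | smul z x _ hx =>
      show (algebraMap (ZMod p) k z) • x ∈ _
      exact Submodule.smul_of_tower_mem _ _ hx
  obtain ⟨b, hb⟩ := Submodule.mem_span_singleton.1 (hTsub y y.2)
  exact ⟨b, c, hcne, by rw [← smul_eq_mul, hb, hyN]⟩

theorem span_orbit_free_of_trace_ne_zero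
    {p : ℕ} [Fact p.Prime] (k : Type*) [Field k] [CharP k p]
    (G : Type*) [Group G] [Fintype G] (hG : IsPGroup p G)
    (V : Type*) [AddCommGroup V] [Module k V] [Module (MonoidAlgebra k G) V]
    [IsScalarTower k (MonoidAlgebra k G) V]
    [FiniteDimensional k V] (hV : Nontrivial V)
    (v : V) (htr : ((∑ g : G, MonoidAlgebra.of k G g) : MonoidAlgebra k G) • v ≠ 0) :
    Nonempty ((Submodule.span (MonoidAlgebra k G) ({v} : Set V))
      ≃ₗ[MonoidAlgebra k G] MonoidAlgebra k G) := by
  classical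
  set f := LinearMap.toSpanSingleton (MonoidAlgebra k G) V v with hf
  have hinj : Function.Injective f := by
    rw [← LinearMap.ker_eq_bot, LinearMap.ker_eq_bot']
    intro a hav
    by_contra ha
    obtain ⟨b, c, hc, hbc⟩ := exists_mul_eq_smul_sum k G hG ha
    have h1 : (b * a) • v = 0 := by
      rw [mul_smul]
      have : a • v = 0 := hav
      rw [this, smul_zero]
    rw [hbc, smul_assoc] at h1
    exact htr ((smul_eq_zero.1 h1).resolve_left hc)
  have hrange : Submodule.span (MonoidAlgebra k G) ({v} : Set V) = LinearMap.range f := by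
    rw [hf, ← LinearMap.span_singleton_eq_range]
  exact ⟨(LinearEquiv.ofEq _ _ hrange).trans (LinearEquiv.ofInjective f hinj).symm⟩
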